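/- Let 0 < a < b and let d : [a,b] → (0,∞) be a continuous function whose negative variation on [a,b] is finite. Then there exists a continuous function φ : [a,b] → (0,∞) such that both φ and the product function x ↦ φ(x)·d(x) are non-increasing on [a,b]. -/

import Mathlib

open Set

/-- A function `f` has finite negative variation on a set `I ⊆ ℝ` if the supremum, over all
finite increasing sequences `t₀ < t₁ < … < t_k` of points of `I`, of
`∑_{i=0}^{k-1} max (f (t i) - f (t (i+1))) 0` is finite. -/
def HasFiniteNegVariationOn (f : ℝ → ℝ) (I : Set ℝ) : Prop :=
  BddAbove {s : ℝ | ∃ (k : ℕ) (t : ℕ → ℝ), (∀ i, i < k → t i < t (i + 1)) ∧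
    (∀ i, i ≤ k → t i ∈ I) ∧ s = ∑ i ∈ Finset.range k, max (f (t i) - f (t (i + 1))) 0}

open ENNReal NNReal

lemma negvar_sum_le {d : ℝ → ℝ} {I : Set ℝ} {C : ℝ}
    (hC : ∀ (k : ℕ) (t : ℕ → ℝ), (∀ i, i < k → t i < t (i + 1)) →
      (∀ i, i ≤ k → t i ∈ I) →
      ∑ i ∈ Finset.range k, max (d (t i) - d (t (i + 1))) 0 ≤ C) :
    ∀ (n : ℕ) (u : ℕ → ℝ), Monotone u → (∀ i, u i ∈ I) →
      ∑ i ∈ Finset.range n, max (d (u i) - d (u (i + 1))) 0 ≤ C := by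
  intro n
  induction n with
  | zero =>
    intro u hu hm
    simpa using hC 0 u (by omega) (fun i _ => hm i)
  | succ n ih =>
    intro u hu hm
    by_cases hdup : ∃ i, i < n + 1 ∧ u i = u (i + 1)
    · obtain ⟨i, hi, hd⟩ := hdup
      classical
      set T : ℕ → ℝ := fun m => max (d (u m) - d (u (m+1))) 0 with hT
      set σ : ℕ → ℕ := fun j => if j < i then j else j + 1 with hσ
      have hσmono : Monotone σ := by
        intro p q hpq
        simp only [hσ]
        split_ifs <;> omega
      set u' : ℕ → ℝ := fun j => u (σ j) with hu'
      have hu'm : Monotone u' := fun p q hpq => hu (hσmono hpq)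
      have hmem' : ∀ j, u' j ∈ I := fun j => hm _
      have h1 : ∀ j ∈ Finset.range n, T (σ j) = max (d (u' j) - d (u' (j+1))) 0 := by
        intro j hj
        rcases lt_trichotomy (j+1) i with h | h | h
        · simp only [hT, hu', hσ, if_pos h, if_pos (show j < i by omega)]
        · subst h
          simp only [hT, hu', hσ, if_pos (show j < j + 1 by omega),
            if_neg (show ¬ (j + 1 < j + 1) by omega)]
          rw [← hd]
        · simp only [hT, hu', hσ, if_neg (show ¬ (j < i) by omega),
            if_neg (show ¬ (j + 1 < i) by omega)]
      have himg : Finset.image σ (Finset.range n) = (Finset.range (n+1)).erase i := by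
        ext m
        simp only [Finset.mem_image, Finset.mem_range, Finset.mem_erase]
        constructor
        · rintro ⟨j, hj, rfl⟩
          simp only [hσ]
          split_ifs <;> omega
        · rintro ⟨hmi, hmn⟩
          rcases lt_or_ge m i with h | h
          · exact ⟨m, by omega, by simp [hσ, h]⟩
          · exact ⟨m - 1, by omega, by simp only [hσ]; rw [if_neg (by omega)]; omega⟩
      have hinj : ∀ p ∈ Finset.range n, ∀ q ∈ Finset.range n, σ p = σ q → p = q := by
        intro p _ q _ h
        simp only [hσ] at h
        split_ifs at h <;> omega
      have key : ∑ j ∈ Finset.range (n+1), T j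
          = ∑ j ∈ Finset.range n, max (d (u' j) - d (u' (j+1))) 0 := by
        calc ∑ j ∈ Finset.range (n+1), T j
            = ∑ j ∈ (Finset.range (n+1)).erase i, T j :=
              (Finset.sum_erase _ (by simp only [hT]; rw [hd]; simp)).symm
          _ = ∑ j ∈ Finset.range n, T (σ j) := by rw [← himg, Finset.sum_image hinj]
          _ = _ := Finset.sum_congr rfl h1
      calc ∑ j ∈ Finset.range (n+1), max (d (u j) - d (u (j+1))) 0
          = ∑ j ∈ Finset.range n, max (d (u' j) - d (u' (j+1))) 0 := key
        _ ≤ C := ih u' hu'm hmem'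
    · push_neg at hdup
      have hstrict : ∀ i, i < n + 1 → u i < u (i + 1) := fun i h =>
        lt_of_le_of_ne (hu (Nat.le_succ i)) (hdup i h)
      exact hC (n+1) u hstrict (fun i _ => hm i)

lemma bv_of_negvar {d : ℝ → ℝ} {I : Set ℝ} {C M : ℝ}
    (hd0 : ∀ x ∈ I, 0 ≤ d x) (hM : ∀ x ∈ I, d x ≤ M)
    (hC : ∀ (k : ℕ) (t : ℕ → ℝ), (∀ i, i < k → t i < t (i + 1)) →
      (∀ i, i ≤ k → t i ∈ I) →
      ∑ i ∈ Finset.range k, max (d (t i) - d (t (i + 1))) 0 ≤ C) :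
    BoundedVariationOn d I := by
  have hbound := negvar_sum_le hC
  apply ne_top_of_le_ne_top (@ENNReal.ofReal_ne_top (M + 2 * C))
  apply iSup_le
  rintro ⟨n, u, hu, us⟩
  have hterm : ∀ i, dist (d (u (i+1))) (d (u i))
      = (d (u (i+1)) - d (u i)) + 2 * max (d (u i) - d (u (i+1))) 0 := by
    intro i
    rw [Real.dist_eq]
    rcases le_total (d (u i)) (d (u (i+1))) with h | h
    · rw [abs_of_nonneg (by linarith), max_eq_right (by linarith)]; ring
    · rw [abs_of_nonpos (by linarith), max_eq_left (by linarith)]; ring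
  calc ∑ i ∈ Finset.range n, edist (d (u (i+1))) (d (u i))
      = ENNReal.ofReal (∑ i ∈ Finset.range n, dist (d (u (i+1))) (d (u i))) := by
        rw [ENNReal.ofReal_sum_of_nonneg (fun i _ => dist_nonneg)]
        exact Finset.sum_congr rfl fun i _ => edist_dist _ _
    _ ≤ ENNReal.ofReal (M + 2 * C) := by
        apply ENNReal.ofReal_le_ofReal
        rw [Finset.sum_congr rfl fun i _ => hterm i, Finset.sum_add_distrib,
          Finset.sum_range_sub (fun i => d (u i)), ← Finset.mul_sum]
        have h1 := hbound n u hu us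
        have h2 := hM (u n) (us n)
        have h3 := hd0 (u 0) (us 0)
        linarith

lemma log_lipschitzOnWith {m : ℝ} (hm : 0 < m) :
    LipschitzOnWith (Real.toNNReal m⁻¹) Real.log (Ici m) := by
  rw [lipschitzOnWith_iff_dist_le_mul]
  have key : ∀ x y : ℝ, m ≤ y → y ≤ x → dist (Real.log x) (Real.log y) ≤ m⁻¹ * dist x y := by
    intro x y hy hxy
    have hy0 : 0 < y := lt_of_lt_of_le hm hy
    have hx0 : 0 < x := lt_of_lt_of_le hy0 hxy
    rw [Real.dist_eq, Real.dist_eq, abs_of_nonneg (sub_nonneg.2 (Real.log_le_log hy0 hxy)),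
      abs_of_nonneg (by linarith)]
    have h1 : Real.log x - Real.log y = Real.log (x / y) := (Real.log_div hx0.ne' hy0.ne').symm
    rw [h1]
    have h2 : Real.log (x / y) ≤ x / y - 1 := Real.log_le_sub_one_of_pos (by positivity)
    have h3 : x / y - 1 = (x - y) / y := by field_simp
    have h4 : (x - y) / y ≤ (x - y) / m := by
      apply div_le_div_of_nonneg_left (by linarith) hm hy
    calc Real.log (x / y) ≤ (x - y) / y := by linarith
      _ ≤ (x - y) / m := h4
      _ = m⁻¹ * (x - y) := by ring
  intro x hx y hy
  have hcoe : ((Real.toNNReal m⁻¹ : NNReal) : ℝ) = m⁻¹ :=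
    Real.coe_toNNReal m⁻¹ (by positivity)
  rw [hcoe]
  rcases le_total y x with h | h
  · exact key x y hy h
  · rw [dist_comm, dist_comm x y]; exact key y x hx h

lemma evar_right_small {f : ℝ → ℝ} {x b : ℝ} (hxb : x ≤ b)
    (hcont : ContinuousWithinAt f (Icc x b) x)
    (hfin : eVariationOn f (Icc x b) ≠ ⊤) {ε : ℝ} (hε : 0 < ε) :
    ∃ δ > 0, ∀ y ∈ Icc x b, y < x + δ → eVariationOn f (Icc x y) < ENNReal.ofReal ε := by
  classical
  by_cases hv : eVariationOn f (Icc x b) ≤ ENNReal.ofReal (ε/2)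
  · refine ⟨1, one_pos, fun y hy _ => ?_⟩
    refine lt_of_le_of_lt (le_trans (eVariationOn.mono f (Icc_subset_Icc le_rfl hy.2)) hv) ?_
    exact ENNReal.ofReal_lt_ofReal_iff hε |>.2 (by linarith)
  · push_neg at hv
    have hε2 : (0:ℝ≥0∞) < ENNReal.ofReal (ε/2) := ENNReal.ofReal_pos.2 (by linarith)
    have hv0 : eVariationOn f (Icc x b) ≠ 0 := by
      intro h; rw [h] at hv; exact (not_lt.2 zero_le) hv
    have hsub : eVariationOn f (Icc x b) - ENNReal.ofReal (ε/2) < eVariationOn f (Icc x b) :=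
      ENNReal.sub_lt_self hfin hv0 hε2.ne'
    have hsub' : eVariationOn f (Icc x b) - ENNReal.ofReal (ε/2) <
        ⨆ p : ℕ × { u : ℕ → ℝ // Monotone u ∧ ∀ i, u i ∈ Icc x b },
          ∑ i ∈ Finset.range p.1, edist (f (p.2.1 (i + 1))) (f (p.2.1 i)) := hsub
    obtain ⟨⟨n, ⟨u, hu, us⟩⟩, hS⟩ := lt_iSup_iff.mp hsub'
    simp only at hS
    have hvS : eVariationOn f (Icc x b) <
        (∑ i ∈ Finset.range n, edist (f (u (i + 1))) (f (u i))) + ENNReal.ofReal (ε/2) :=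
      (ENNReal.sub_lt_iff_lt_right ENNReal.ofReal_ne_top hv.le).mp hS
    -- δ₁ : gap above x among partition points
    set F := (Finset.range (n+1)).filter (fun i => x < u i) with hF
    obtain ⟨δ₁, hδ₁pos, hδ₁le⟩ : ∃ δ₁ > 0, ∀ i ≤ n, x < u i → x + δ₁ ≤ u i := by
      by_cases hne : F.Nonempty
      · refine ⟨F.inf' hne (fun i => u i - x), ?_, ?_⟩
        · rw [gt_iff_lt, Finset.lt_inf'_iff]
          intro i hiF
          have := (Finset.mem_filter.1 hiF).2
          linarith
        · intro i hi hxi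
          have hiF : i ∈ F := Finset.mem_filter.2 ⟨Finset.mem_range.2 (by omega), hxi⟩
          have := Finset.inf'_le (fun i => u i - x) hiF
          linarith
      · refine ⟨1, one_pos, fun i hi hxi => absurd ?_ (fun h => hne ⟨i, h⟩)⟩
        exact Finset.mem_filter.2 ⟨Finset.mem_range.2 (by omega), hxi⟩
    -- δ₂ from continuity
    set η : ℝ := ε / (2 * (n + 1)) with hη
    have hηpos : 0 < η := by positivity
    obtain ⟨δ₂, hδ₂pos, hδ₂⟩ := Metric.continuousWithinAt_iff.mp hcont η hηpos
    refine ⟨min δ₁ δ₂, lt_min hδ₁pos hδ₂pos, fun y hy hyδ => ?_⟩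
    have hyx : x ≤ y := hy.1
    have hfyx : edist (f y) (f x) ≤ ENNReal.ofReal η := by
      rw [edist_dist]
      apply ENNReal.ofReal_le_ofReal
      apply le_of_lt
      apply hδ₂ hy
      rw [Real.dist_eq, abs_of_nonneg (by linarith)]
      have := lt_of_lt_of_le hyδ (add_le_add_right (min_le_right δ₁ δ₂) x)
      linarith
    have hylt : ∀ i ≤ n, x < u i → y < u i := by
      intro i hi hxi
      have h1 := hδ₁le i hi hxi
      have h2 := lt_of_lt_of_le hyδ (add_le_add_right (min_le_left δ₁ δ₂) x)
      linarith
    set w : ℕ → ℝ := fun i => max y (u i) with hw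
    have hwmono : Monotone w := fun i j h => max_le_max le_rfl (hu h)
    have hwmem : ∀ i, w i ∈ Icc y b := fun i => ⟨le_max_left _ _, max_le hy.2 (us i).2⟩
    have hterm : ∀ i < n, edist (f (u (i+1))) (f (u i))
        ≤ edist (f (w (i+1))) (f (w i)) + ENNReal.ofReal η := by
      intro i hi
      by_cases hui : x < u i
      · have h1 : w i = u i := max_eq_right (hylt i (by omega) hui).le
        have h2 : w (i+1) = u (i+1) :=
          max_eq_right ((hylt i (by omega) hui).le.trans (hu (Nat.le_succ i)))
        rw [h1, h2]; exact le_self_add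
      · have hui' : u i = x := le_antisymm (not_lt.1 hui) (us i).1
        by_cases hui1 : x < u (i+1)
        · have h2 : w (i+1) = u (i+1) := max_eq_right (hylt (i+1) (by omega) hui1).le
          have h1 : w i = y := by rw [hw]; simp only; rw [hui']; exact max_eq_left hyx
          rw [h1, h2, hui']
          calc edist (f (u (i+1))) (f x)
              ≤ edist (f (u (i+1))) (f y) + edist (f y) (f x) := edist_triangle _ _ _
            _ ≤ edist (f (u (i+1))) (f y) + ENNReal.ofReal η := add_le_add_right hfyx _
        · have h3 : u (i+1) = x := le_antisymm (not_lt.1 hui1) (us (i+1)).1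
          rw [h3, hui', edist_self]; exact zero_le
    have hsum : (∑ i ∈ Finset.range n, edist (f (u (i + 1))) (f (u i)))
        ≤ (∑ i ∈ Finset.range n, edist (f (w (i + 1))) (f (w i))) + ENNReal.ofReal (ε/2) := by
      calc (∑ i ∈ Finset.range n, edist (f (u (i + 1))) (f (u i)))
          ≤ ∑ i ∈ Finset.range n, (edist (f (w (i + 1))) (f (w i)) + ENNReal.ofReal η) :=
            Finset.sum_le_sum (fun i hi => hterm i (Finset.mem_range.1 hi))
        _ = (∑ i ∈ Finset.range n, edist (f (w (i + 1))) (f (w i)))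
            + n * ENNReal.ofReal η := by
            rw [Finset.sum_add_distrib, Finset.sum_const, Finset.card_range, nsmul_eq_mul]
        _ ≤ _ := by
            apply add_le_add_right
            have h1 : (n : ℝ≥0∞) * ENNReal.ofReal η = ENNReal.ofReal (n * η) := by
              rw [ENNReal.ofReal_mul (by positivity), ENNReal.ofReal_natCast]
            rw [h1]
            apply ENNReal.ofReal_le_ofReal
            have h2 : (n:ℝ) * (ε / (2 * ((n:ℝ)+1))) = (n:ℝ)/((n:ℝ)+1) * (ε/2) := by
              field_simp
            rw [hη, h2]
            have h3 : (n:ℝ)/((n:ℝ)+1) ≤ 1 := by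
              rw [div_le_one (by positivity)]
              linarith [Nat.cast_nonneg (α := ℝ) n]
            exact mul_le_of_le_one_left (by positivity) h3
    have hB : (∑ i ∈ Finset.range n, edist (f (w (i + 1))) (f (w i)))
        ≤ eVariationOn f (Icc y b) := eVariationOn.sum_le (n := n) hwmono hwmem
    have hadd : eVariationOn f (Icc x y) + eVariationOn f (Icc y b)
        = eVariationOn f (Icc x b) := by
      have h := eVariationOn.Icc_add_Icc f (s := Icc x b) hyx hy.2 hy
      rwa [inter_eq_self_of_subset_right (Icc_subset_Icc le_rfl hy.2),
        inter_eq_self_of_subset_right (Icc_subset_Icc hyx le_rfl), inter_self] at h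
    have hBne : eVariationOn f (Icc y b) ≠ ⊤ :=
      ne_top_of_le_ne_top hfin (eVariationOn.mono f (Icc_subset_Icc hyx le_rfl))
    have hfinal : eVariationOn f (Icc x y) + eVariationOn f (Icc y b)
        < eVariationOn f (Icc y b) + ENNReal.ofReal ε := by
      rw [hadd]
      calc eVariationOn f (Icc x b)
          < (∑ i ∈ Finset.range n, edist (f (u (i + 1))) (f (u i))) + ENNReal.ofReal (ε/2) := hvS
        _ ≤ ((∑ i ∈ Finset.range n, edist (f (w (i + 1))) (f (w i))) + ENNReal.ofReal (ε/2))
            + ENNReal.ofReal (ε/2) := add_le_add_left hsum _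
        _ ≤ (eVariationOn f (Icc y b) + ENNReal.ofReal (ε/2)) + ENNReal.ofReal (ε/2) := by
            gcongr
        _ = eVariationOn f (Icc y b) + ENNReal.ofReal ε := by
            rw [add_assoc, ← ENNReal.ofReal_add (by linarith) (by linarith)]
            norm_num
    rw [add_comm] at hfinal
    exact (ENNReal.add_lt_add_iff_left hBne).mp hfinal

lemma evar_left_small {f : ℝ → ℝ} {a x : ℝ} (hax : a ≤ x)
    (hcont : ContinuousWithinAt f (Icc a x) x)
    (hfin : eVariationOn f (Icc a x) ≠ ⊤) {ε : ℝ} (hε : 0 < ε) :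
    ∃ δ > 0, ∀ y ∈ Icc a x, x - δ < y → eVariationOn f (Icc y x) < ENNReal.ofReal ε := by
  have himg : ∀ p q : ℝ, Neg.neg '' Icc p q = Icc (-q) (-p) := fun p q => image_neg_Icc (a := p) (b := q)
  have hanti : ∀ s : Set ℝ, AntitoneOn (Neg.neg : ℝ → ℝ) s :=
    fun s p _ q _ h => neg_le_neg h
  have hcont' : ContinuousWithinAt (f ∘ Neg.neg) (Icc (-x) (-a)) (-x) := by
    have h0 : ContinuousWithinAt f (Icc a x) (-(-x)) := by rw [neg_neg]; exact hcont
    exact ContinuousWithinAt.comp h0 (continuous_neg.continuousWithinAt)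
      (fun t ht => ⟨by simpa using neg_le_neg ht.2, by simpa using neg_le_neg ht.1⟩)
  have hvareq : eVariationOn (f ∘ Neg.neg) (Icc (-x) (-a)) = eVariationOn f (Icc a x) := by
    rw [eVariationOn.comp_eq_of_antitoneOn f Neg.neg (hanti _), himg, neg_neg, neg_neg]
  obtain ⟨δ, hδpos, hδ⟩ := evar_right_small (neg_le_neg hax) hcont'
    (by rw [hvareq]; exact hfin) hε
  refine ⟨δ, hδpos, fun y hy hyδ => ?_⟩
  have h1 : -y ∈ Icc (-x) (-a) := ⟨neg_le_neg hy.2, neg_le_neg hy.1⟩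
  have h2 : -y < -x + δ := by linarith
  have h3 := hδ (-y) h1 h2
  rwa [eVariationOn.comp_eq_of_antitoneOn f Neg.neg (hanti _), himg, neg_neg, neg_neg] at h3

lemma contOn_variation {f : ℝ → ℝ} {a b : ℝ} (hab : a ≤ b)
    (hcont : ContinuousOn f (Icc a b)) (hfin : eVariationOn f (Icc a b) ≠ ⊤) :
    ContinuousOn (fun x => variationOnFromTo f (Icc a b) a x) (Icc a b) := by
  have hloc : LocallyBoundedVariationOn f (Icc a b) :=
    BoundedVariationOn.locallyBoundedVariationOn hfin
  intro x hx
  rw [Metric.continuousWithinAt_iff]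
  intro ε hε
  obtain ⟨δr, hδrpos, hδr⟩ := evar_right_small hx.2
    ((hcont x hx).mono (Icc_subset_Icc hx.1 le_rfl))
    (ne_top_of_le_ne_top hfin (eVariationOn.mono f (Icc_subset_Icc hx.1 le_rfl))) hε
  obtain ⟨δl, hδlpos, hδl⟩ := evar_left_small hx.1
    ((hcont x hx).mono (Icc_subset_Icc le_rfl hx.2))
    (ne_top_of_le_ne_top hfin (eVariationOn.mono f (Icc_subset_Icc le_rfl hx.2))) hε
  refine ⟨min δl δr, lt_min hδlpos hδrpos, fun y hy hyd => ?_⟩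
  have hVdiff : variationOnFromTo f (Icc a b) a y - variationOnFromTo f (Icc a b) a x
      = variationOnFromTo f (Icc a b) x y := by
    rw [← variationOnFromTo.add hloc (left_mem_Icc.2 hab) hx hy]
    ring
  rw [Real.dist_eq, hVdiff]
  rcases le_total x y with h | h
  · rw [variationOnFromTo.eq_of_le f _ h,
      inter_eq_self_of_subset_right (Icc_subset_Icc hx.1 hy.2)]
    have hyxd : y < x + δr := by
      rw [Real.dist_eq, abs_of_nonneg (by linarith)] at hyd
      have := lt_of_lt_of_le hyd (min_le_right δl δr)
      linarith
    have h4 := hδr y ⟨h, hy.2⟩ hyxd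
    rw [abs_of_nonneg ENNReal.toReal_nonneg]
    exact ENNReal.toReal_lt_of_lt_ofReal h4
  · rw [variationOnFromTo.eq_of_ge f _ h,
      inter_eq_self_of_subset_right (Icc_subset_Icc hy.1 hx.2)]
    have hyxd : x - δl < y := by
      rw [Real.dist_eq, abs_of_nonpos (by linarith)] at hyd
      have := lt_of_lt_of_le hyd (min_le_left δl δr)
      linarith
    have h4 := hδl y ⟨hy.1, h⟩ hyxd
    rw [abs_neg, abs_of_nonneg ENNReal.toReal_nonneg]
    exact ENNReal.toReal_lt_of_lt_ofReal h4

lemma add_self_monotoneOn {f : ℝ → ℝ} {s : Set ℝ} (hf : LocallyBoundedVariationOn f s)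
    {a : ℝ} (as : a ∈ s) :
    MonotoneOn (fun x => variationOnFromTo f s a x + f x) s := by
  intro x xs y ys xy
  have hkey : f x - f y ≤ variationOnFromTo f s x y := by
    calc f x - f y ≤ |f x - f y| := le_abs_self _
      _ = dist (f x) (f y) := (Real.dist_eq _ _).symm
      _ ≤ _ := by
        rw [variationOnFromTo.eq_of_le f s xy, dist_edist]
        apply ENNReal.toReal_mono (hf x y xs ys)
        exact eVariationOn.edist_le f ⟨xs, le_rfl, xy⟩ ⟨ys, xy, le_rfl⟩
  have hadd := variationOnFromTo.add hf as xs ys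
  simp only
  linarith

theorem stmt0 (a b : ℝ) (ha : 0 < a) (hab : a < b) (d : ℝ → ℝ)
    (hcont : ContinuousOn d (Icc a b)) (hpos : ∀ x ∈ Icc a b, 0 < d x)
    (hvar : HasFiniteNegVariationOn d (Icc a b)) :
    ∃ φ : ℝ → ℝ, ContinuousOn φ (Icc a b) ∧ (∀ x ∈ Icc a b, 0 < φ x) ∧
      AntitoneOn φ (Icc a b) ∧ AntitoneOn (fun x => φ x * d x) (Icc a b) := by
  have habIcc : a ≤ b := hab.le
  have hane : (Icc a b).Nonempty := nonempty_Icc.2 habIcc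
  have haI : a ∈ Icc a b := left_mem_Icc.2 habIcc
  -- min and max of d
  obtain ⟨z, hz, hzmin⟩ := isCompact_Icc.exists_isMinOn hane hcont
  have hm : 0 < d z := hpos z hz
  have hdm : ∀ t ∈ Icc a b, d z ≤ d t := fun t ht => hzmin ht
  obtain ⟨Z, hZ, hZmax⟩ := isCompact_Icc.exists_isMaxOn hane hcont
  have hdM : ∀ t ∈ Icc a b, d t ≤ d Z := fun t ht => hZmax ht
  -- bounded variation of d
  obtain ⟨C, hC⟩ := hvar
  have hC' : ∀ (k : ℕ) (t : ℕ → ℝ), (∀ i, i < k → t i < t (i + 1)) →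
      (∀ i, i ≤ k → t i ∈ Icc a b) →
      ∑ i ∈ Finset.range k, max (d (t i) - d (t (i + 1))) 0 ≤ C :=
    fun k t h1 h2 => hC ⟨k, t, h1, h2, rfl⟩
  have hdBV : BoundedVariationOn d (Icc a b) :=
    bv_of_negvar (fun t ht => (hpos t ht).le) hdM hC'
  -- f = log ∘ d
  set f : ℝ → ℝ := fun t => Real.log (d t) with hf
  have hfcont : ContinuousOn f (Icc a b) := hcont.log (fun t ht => (hpos t ht).ne')
  have hfBV : BoundedVariationOn f (Icc a b) :=
    LipschitzOnWith.comp_boundedVariationOn (log_lipschitzOnWith hm)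
      (fun t ht => hdm t ht) hdBV
  have hfloc : LocallyBoundedVariationOn f (Icc a b) :=
    hfBV.locallyBoundedVariationOn
  set V : ℝ → ℝ := fun x => variationOnFromTo f (Icc a b) a x with hV
  have hVcont : ContinuousOn V (Icc a b) := contOn_variation habIcc hfcont hfBV
  have hVmono : MonotoneOn V (Icc a b) := variationOnFromTo.monotoneOn hfloc haI
  have hVfmono : MonotoneOn (fun x => V x + f x) (Icc a b) := add_self_monotoneOn hfloc haI
  refine ⟨fun x => Real.exp (-(V x) - f x), ?_, ?_, ?_, ?_⟩
  · exact Real.continuous_exp.comp_continuousOn ((hVcont.neg).sub hfcont)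
  · exact fun x _ => Real.exp_pos _
  · intro x hx y hy hxy
    apply Real.exp_le_exp.2
    have := hVfmono hx hy hxy
    simp only at this ⊢
    linarith
  · intro x hx y hy hxy
    have hkey : ∀ t ∈ Icc a b, Real.exp (-(V t) - f t) * d t = Real.exp (-(V t)) := by
      intro t ht
      rw [hf]
      simp only
      rw [Real.exp_sub, ← Real.exp_log (hpos t ht)]
      field_simp
      rw [Real.log_exp]
    simp only
    rw [hkey x hx, hkey y hy]
    exact Real.exp_le_exp.2 (neg_le_neg (hVmono hx hy hxy))
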